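/- If σ(w,t) is the Möbius function of the Tamari order, then for trees t₁, t₂: M_{t₁ ⋋ t₂} = M_{t₁} ⋋ M_{t₂}, where M_t = Σ_{w ≤_T t} μ(w,t)·w and ⋋ is extended bilinearly. More generally, if t = t₁ ⋋ ⋯ ⋋ t_r with each tᵢ ⋋-irreducible, then M_t = M_{t₁} ⋋ ⋯ ⋋ M_{t_r}. -/
import Mathlib


open Classical

/-- Planar binary rooted trees. `leaf` is the unique tree `|` with one leaf. -/
inductive PBT : Type
  | leaf : PBT
  | node : PBT → PBT → PBT
  deriving DecidableEq

/-- Number of leaves of a planar binary rooted tree. -/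
def leavesCount : PBT → ℕ
  | .leaf => 1
  | .node l r => leavesCount l + leavesCount r

/-- Graft the tree `w` onto the leftmost (first) leaf of `t`. -/
def graft1 : PBT → PBT → PBT
  | .leaf, w => w
  | .node l r, w => .node (graft1 l w) r

/-- The product `t ⋋ w := w ∘₁ (t ∨ |)`. -/
def lprod (t w : PBT) : PBT := graft1 w (.node t .leaf)

/-- A tree is `⋋`-irreducible if it is not a product of two (nonempty) trees. -/
def Irr (t : PBT) : Prop := ¬ ∃ u w : PBT, t = lprod u w

/-- One covering move of the Tamari order: a right rotation
`(a ∨ b) ∨ c ↦ a ∨ (b ∨ c)` applied at some internal node. -/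
inductive TStep : PBT → PBT → Prop
  | rot (a b c : PBT) : TStep (.node (.node a b) c) (.node a (.node b c))
  | left {a a' : PBT} (c : PBT) : TStep a a' → TStep (.node a c) (.node a' c)
  | right (a : PBT) {c c' : PBT} : TStep c c' → TStep (.node a c) (.node a c')

/-- The Tamari order on planar binary rooted trees: the reflexive transitive
closure of the rotation moves. -/
def tle : PBT → PBT → Prop := Relation.ReflTransGen TStep

/-- The bilinear extension of `⋋` to the free module on trees. -/
noncomputable def lprodF (f g : PBT →₀ ℤ) : PBT →₀ ℤ :=
  f.sum fun t a => g.sum fun w b => (a * b) • Finsupp.single (lprod t w) 1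

/- ===== auxiliary lemmas ===== -/

lemma lprod_leaf (u : PBT) : lprod u .leaf = .node u .leaf := rfl

lemma lprod_node (u a c : PBT) : lprod u (.node a c) = .node (lprod u a) c := rfl

lemma leaves_pos (t : PBT) : 1 ≤ leavesCount t := by
  induction t with
  | leaf => simp [leavesCount]
  | node l r ihl ihr => simp [leavesCount]; omega

lemma lprod_leaves (u v : PBT) : leavesCount (lprod u v) = leavesCount u + leavesCount v := by
  induction v with
  | leaf => simp [lprod_leaf, leavesCount]
  | node a c iha ihc =>
      rw [lprod_node]
      simp only [leavesCount, iha]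
      omega

lemma tstep_leaves {a b : PBT} (h : TStep a b) : leavesCount a = leavesCount b := by
  induction h with
  | rot a b c => simp [leavesCount]; omega
  | left c _ ih => simp [leavesCount, ih]
  | right a _ ih => simp [leavesCount, ih]

lemma tle_leaves {a b : PBT} (h : tle a b) : leavesCount a = leavesCount b := by
  induction h with
  | refl => rfl
  | tail _ h2 ih => exact ih.trans (tstep_leaves h2)

/-- weight strictly decreasing along TStep -/
def wt : PBT → ℕ
  | .leaf => 0
  | .node l r => wt l + wt r + leavesCount l

lemma tstep_wt {a b : PBT} (h : TStep a b) : wt b < wt a := by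
  induction h with
  | rot a b c =>
      have := leaves_pos a
      simp [wt, leavesCount]; omega
  | left c h ih =>
      have := tstep_leaves h
      simp [wt]; omega
  | right a h ih => simp [wt]; omega

lemma tle_wt {a b : PBT} (h : tle a b) : wt b ≤ wt a := by
  induction h with
  | refl => exact le_refl _
  | tail _ h2 ih => exact le_trans (le_of_lt (tstep_wt h2)) ih

lemma tle_wt_strict {a b : PBT} (h : tle a b) (hne : a ≠ b) : wt b < wt a := by
  rcases (Relation.ReflTransGen.cases_head h) with h | ⟨c, h1, h2⟩
  · exact absurd h (by simp [hne])
  · exact lt_of_le_of_lt (tle_wt h2) (tstep_wt h1)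

lemma tle_antisymm {a b : PBT} (h : tle a b) (h' : tle b a) : a = b := by
  by_contra hne
  have := tle_wt_strict h hne
  have := tle_wt h'
  omega

lemma lprod_inj {u v u' v' : PBT} (h : lprod u v = lprod u' v')
    (hl : leavesCount u = leavesCount u') : u = u' ∧ v = v' := by
  induction v generalizing v' with
  | leaf =>
      cases v' with
      | leaf => simp [lprod_leaf] at h; exact ⟨h, rfl⟩
      | node a' c' =>
          rw [lprod_leaf, lprod_node] at h
          cases h with | refl =>
          exfalso
          have := lprod_leaves u' a'
          have := leaves_pos a'
          omega
  | node a c ih =>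
      cases v' with
      | leaf =>
          rw [lprod_leaf, lprod_node] at h
          cases h with | refl =>
          exfalso
          have := lprod_leaves u a
          have := leaves_pos a
          omega
      | node a' c' =>
          rw [lprod_node, lprod_node] at h
          injection h with h1 h2
          obtain ⟨e1, e2⟩ := ih h1
          exact ⟨e1, by rw [e2, h2]⟩

lemma tstep_lprod_left {u u' : PBT} (v : PBT) (h : TStep u u') :
    TStep (lprod u v) (lprod u' v) := by
  induction v with
  | leaf => exact TStep.left _ h
  | node a c ih => exact TStep.left _ ih

lemma tstep_lprod_right (u : PBT) {v v' : PBT} (h : TStep v v') :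
    TStep (lprod u v) (lprod u v') := by
  induction h with
  | rot a b c => exact TStep.rot _ _ _
  | left c h ih => exact TStep.left _ ih
  | right a h ih => exact TStep.right _ h

lemma tle_lprod {u u' v v' : PBT} (h1 : tle u u') (h2 : tle v v') :
    tle (lprod u v) (lprod u' v') := by
  have s1 : tle (lprod u v) (lprod u' v) := by
    induction h1 with
    | refl => exact Relation.ReflTransGen.refl
    | tail _ hstep ih => exact ih.tail (tstep_lprod_left _ hstep)
  have s2 : tle (lprod u' v) (lprod u' v') := by
    induction h2 with
    | refl => exact Relation.ReflTransGen.refl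
    | tail _ hstep ih => exact ih.tail (tstep_lprod_right _ hstep)
  exact s1.trans s2

lemma tstep_to_lprod {w u v : PBT} (h : TStep w (lprod u v)) :
    (∃ u', w = lprod u' v ∧ TStep u' u) ∨ (∃ v', w = lprod u v' ∧ TStep v' v) := by
  induction v generalizing w with
  | leaf =>
      rw [lprod_leaf] at h
      cases h with
      | left c h => exact Or.inl ⟨_, rfl, h⟩
      | right a h => cases h
  | node a c iha ihc =>
      clear ihc
      rw [lprod_node] at h
      cases h with
      | rot a₀ b₀ c₀ =>
          refine Or.inr ⟨.node (.node a b₀) c₀, ?_, TStep.rot a b₀ c₀⟩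
          rfl
      | left c h =>
          rcases iha h with ⟨u', rfl, hs⟩ | ⟨v', rfl, hs⟩
          · exact Or.inl ⟨u', rfl, hs⟩
          · exact Or.inr ⟨.node v' c, rfl, TStep.left c hs⟩
      | right _ h =>
          exact Or.inr ⟨.node a _, rfl, TStep.right a h⟩

lemma tle_to_lprod {w t₁ t₂ : PBT} (h : tle w (lprod t₁ t₂)) :
    ∃ u v, w = lprod u v ∧ tle u t₁ ∧ tle v t₂ := by
  induction h using Relation.ReflTransGen.head_induction_on with
  | refl => exact ⟨t₁, t₂, rfl, Relation.ReflTransGen.refl, Relation.ReflTransGen.refl⟩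
  | head hstep _ ih =>
      obtain ⟨u', v', rfl, hu, hv⟩ := ih
      rcases tstep_to_lprod hstep with ⟨u, rfl, hs⟩ | ⟨v, rfl, hs⟩
      · exact ⟨u, v', rfl, Relation.ReflTransGen.head hs hu, hv⟩
      · exact ⟨u', v, rfl, hu, Relation.ReflTransGen.head hs hv⟩

/-- enumeration of trees with at most n leaves -/
noncomputable def enum : ℕ → Finset PBT
  | 0 => ∅
  | n+1 => insert .leaf (((enum n) ×ˢ (enum n)).image fun p => .node p.1 p.2)

lemma mem_enum : ∀ (t : PBT) (n : ℕ), leavesCount t ≤ n → t ∈ enum n := by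
  intro t
  induction t with
  | leaf =>
      intro n hn
      match n, hn with
      | 0, hn => simp [leavesCount] at hn
      | n+1, _ => simp [enum]
  | node a b iha ihb =>
      intro n hn
      have ha := leaves_pos a
      have hb := leaves_pos b
      have hlc : leavesCount (PBT.node a b) = leavesCount a + leavesCount b := rfl
      match n, hn with
      | 0, hn => simp [hlc] at hn; omega
      | n+1, hn =>
          have h1 : leavesCount a ≤ n := by omega
          have h2 : leavesCount b ≤ n := by omega
          simp only [enum, Finset.mem_insert, Finset.mem_image]
          exact Or.inr ⟨(a, b), Finset.mem_product.2 ⟨iha n h1, ihb n h2⟩, rfl⟩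

lemma finite_leaves (n : ℕ) : {t : PBT | leavesCount t = n}.Finite :=
  Set.Finite.subset (enum n).finite_toSet (fun t ht => mem_enum t n (le_of_eq ht))

lemma finite_itv (w t : PBT) : {z : PBT | tle w z ∧ tle z t}.Finite :=
  Set.Finite.subset (finite_leaves (leavesCount t)) (fun z hz => tle_leaves hz.2)

/-- the interval `[w,t]` as a Finset -/
noncomputable def itv (w t : PBT) : Finset PBT := (finite_itv w t).toFinset

lemma mem_itv {z w t : PBT} : z ∈ itv w t ↔ tle w z ∧ tle z t := by
  simp [itv, Set.Finite.mem_toFinset]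

section Mu
variable (μ : PBT → PBT → ℤ)

lemma itv_self (t : PBT) : itv t t = {t} := by
  ext z
  simp only [mem_itv, Finset.mem_singleton]
  constructor
  · rintro ⟨h1, h2⟩; exact (tle_antisymm h1 h2).symm
  · rintro rfl; exact ⟨Relation.ReflTransGen.refl, Relation.ReflTransGen.refl⟩

lemma sum_itv_eq_zero
    (hμsum : ∀ w t : PBT, tle w t → w ≠ t →
      (∑ᶠ z : PBT, if tle w z ∧ tle z t then μ z t else 0) = 0)
    {w t : PBT} (h : tle w t) (hne : w ≠ t) :
    ∑ z ∈ itv w t, μ z t = 0 := by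
  have hsub : (Function.support fun z => if tle w z ∧ tle z t then μ z t else 0)
      ⊆ ↑(itv w t) := by
    intro z hz
    simp only [Function.mem_support, ne_eq, ite_eq_right_iff, not_forall] at hz
    exact Finset.mem_coe.2 (mem_itv.2 hz.choose)
  have := finsum_eq_sum_of_support_subset _ hsub
  rw [hμsum w t h hne] at this
  rw [← this.symm]
  apply Finset.sum_congr rfl
  intro z hz
  simp [mem_itv.1 hz]

lemma sum_itv
    (hμrefl : ∀ t : PBT, μ t t = 1)
    (hμsum : ∀ w t : PBT, tle w t → w ≠ t →
      (∑ᶠ z : PBT, if tle w z ∧ tle z t then μ z t else 0) = 0)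
    {w t : PBT} (h : tle w t) :
    ∑ z ∈ itv w t, μ z t = if w = t then 1 else 0 := by
  by_cases he : w = t
  · subst he; simp [itv_self, hμrefl]
  · simp [he, sum_itv_eq_zero μ hμsum h he]

lemma itv_lprod {u v t₁ t₂ : PBT} (hu : tle u t₁) (hv : tle v t₂) :
    itv (lprod u v) (lprod t₁ t₂) =
      ((itv u t₁) ×ˢ (itv v t₂)).image (fun p => lprod p.1 p.2) := by
  ext z
  simp only [mem_itv, Finset.mem_image, Finset.mem_product]
  constructor
  · rintro ⟨h1, h2⟩
    obtain ⟨u', v', rfl, hu', hv'⟩ := tle_to_lprod h2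
    obtain ⟨a, b, hab, ha, hb⟩ := tle_to_lprod h1
    have hleq : leavesCount a = leavesCount u := by
      rw [tle_leaves ha, tle_leaves hu', ← tle_leaves hu]
    obtain ⟨rfl, rfl⟩ := lprod_inj hab.symm hleq
    exact ⟨(u', v'), ⟨⟨ha, hu'⟩, hb, hv'⟩, rfl⟩
  · rintro ⟨⟨a, b⟩, ⟨⟨ha1, ha2⟩, hb1, hb2⟩, rfl⟩
    exact ⟨tle_lprod ha1 hb1, tle_lprod ha2 hb2⟩

lemma P1
    (hμrefl : ∀ t : PBT, μ t t = 1)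
    (hμsum : ∀ w t : PBT, tle w t → w ≠ t →
      (∑ᶠ z : PBT, if tle w z ∧ tle z t then μ z t else 0) = 0)
    (t₁ t₂ : PBT) :
    ∀ (n : ℕ) (u v : PBT), wt (lprod u v) ≤ n → tle u t₁ → tle v t₂ →
      μ (lprod u v) (lprod t₁ t₂) = μ u t₁ * μ v t₂ := by
  intro n
  induction n using Nat.strong_induction_on with
  | _ n ih =>
    intro u v hwt hu hv
    by_cases hend : u = t₁ ∧ v = t₂
    · obtain ⟨rfl, rfl⟩ := hend
      rw [hμrefl, hμrefl, hμrefl]; ring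
    · -- w ≠ t
      have hne : lprod u v ≠ lprod t₁ t₂ := by
        intro he
        exact hend (lprod_inj he (by rw [tle_leaves hu]))
      have hle : tle (lprod u v) (lprod t₁ t₂) := tle_lprod hu hv
      have hsum0 := sum_itv_eq_zero μ hμsum hle hne
      rw [itv_lprod hu hv] at hsum0
      -- injectivity on the product finset
      have hinj : Set.InjOn (fun p : PBT × PBT => lprod p.1 p.2)
          ↑((itv u t₁) ×ˢ (itv v t₂)) := by
        rintro ⟨a, b⟩ hab ⟨a', b'⟩ hab' he
        simp only [Finset.coe_product, Set.mem_prod, Finset.mem_coe, mem_itv] at hab hab'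
        have hleq : leavesCount a = leavesCount a' := by
          rw [tle_leaves hab.1.2, tle_leaves hab'.1.2]
        obtain ⟨rfl, rfl⟩ := lprod_inj he hleq
        rfl
      rw [Finset.sum_image (fun p hp q hq => hinj (Finset.mem_coe.2 hp) (Finset.mem_coe.2 hq))]
        at hsum0
      have hmemuv : (u, v) ∈ (itv u t₁) ×ˢ (itv v t₂) := by
        simp only [Finset.mem_product, mem_itv]
        exact ⟨⟨Relation.ReflTransGen.refl, hu⟩, Relation.ReflTransGen.refl, hv⟩
      rw [← Finset.add_sum_erase _ _ hmemuv] at hsum0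
      -- rewrite the erased sum using the induction hypothesis
      have herase : ∑ p ∈ ((itv u t₁) ×ˢ (itv v t₂)).erase (u, v),
          μ (lprod p.1 p.2) (lprod t₁ t₂)
          = ∑ p ∈ ((itv u t₁) ×ˢ (itv v t₂)).erase (u, v), μ p.1 t₁ * μ p.2 t₂ := by
        apply Finset.sum_congr rfl
        rintro ⟨a, b⟩ hp
        have hpne := Finset.ne_of_mem_erase hp
        have hpm := Finset.mem_of_mem_erase hp
        simp only [Finset.mem_product, mem_itv] at hpm
        have hzle : tle (lprod u v) (lprod a b) := tle_lprod hpm.1.1 hpm.2.1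
        have hzne : lprod u v ≠ lprod a b := by
          intro he
          apply hpne
          have hleq : leavesCount u = leavesCount a := by
            rw [tle_leaves hu, tle_leaves hpm.1.2]
          obtain ⟨rfl, rfl⟩ := lprod_inj he hleq
          rfl
        have hwt' : wt (lprod a b) < n :=
          lt_of_lt_of_le (tle_wt_strict hzle hzne) hwt
        exact ih (wt (lprod a b)) (lt_of_lt_of_le hwt' (le_refl n)) a b (le_refl _)
          hpm.1.2 hpm.2.2
      rw [herase] at hsum0
      have hprod : ∑ p ∈ ((itv u t₁) ×ˢ (itv v t₂)).erase (u, v), μ p.1 t₁ * μ p.2 t₂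
          = (∑ a ∈ itv u t₁, μ a t₁) * (∑ b ∈ itv v t₂, μ b t₂) - μ u t₁ * μ v t₂ := by
        rw [Finset.sum_mul_sum, ← Finset.sum_product', ← Finset.add_sum_erase _ _ hmemuv]
        ring
      rw [hprod, sum_itv μ hμrefl hμsum hu, sum_itv μ hμrefl hμsum hv] at hsum0
      have : ¬(u = t₁) ∨ ¬(v = t₂) := by tauto
      rcases this with h | h <;> simp [h] at hsum0 <;> linarith

end Mu

lemma lprodF_apply (f g : PBT →₀ ℤ) (x : PBT) :
    lprodF f g x = ∑ a ∈ f.support, ∑ b ∈ g.support,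
      (f a * g b) * (if lprod a b = x then 1 else 0) := by
  unfold lprodF
  rw [Finsupp.sum, Finsupp.finset_sum_apply]
  apply Finset.sum_congr rfl
  intro a _
  rw [Finsupp.sum, Finsupp.finset_sum_apply]
  apply Finset.sum_congr rfl
  intro b _
  by_cases he : lprod a b = x <;> simp [Finsupp.single_apply, he]


/-- `M_{t₁ ⋋ t₂} = M_{t₁} ⋋ M_{t₂}`, and more generally if
`t = t₁ ⋋ ⋯ ⋋ t_r` with each `tᵢ` `⋋`-irreducible then
`M_t = M_{t₁} ⋋ ⋯ ⋋ M_{t_r}`. -/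
theorem stmt12
    (μ : PBT → PBT → ℤ) (M : PBT → (PBT →₀ ℤ))
    (hM : ∀ t w : PBT, M t w = μ w t)
    (hμrefl : ∀ t : PBT, μ t t = 1)
    (hμzero : ∀ w t : PBT, ¬ tle w t → μ w t = 0)
    (hμsum : ∀ w t : PBT, tle w t → w ≠ t →
      (∑ᶠ z : PBT, if tle w z ∧ tle z t then μ z t else 0) = 0)
    :
    (∀ t₁ t₂ : PBT, M (lprod t₁ t₂) = lprodF (M t₁) (M t₂)) ∧
    (∀ (t : PBT) (rest : List PBT), Irr t → (∀ s ∈ rest, Irr s) →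
      M (List.foldl lprod t rest) = List.foldl lprodF (M t) (rest.map M)) := by
  have key : ∀ t₁ t₂ : PBT, M (lprod t₁ t₂) = lprodF (M t₁) (M t₂) := by
    intro t₁ t₂
    ext x
    rw [lprodF_apply, hM]
    simp only [hM]
    by_cases hx : tle x (lprod t₁ t₂)
    · obtain ⟨u, v, rfl, hu, hv⟩ := tle_to_lprod hx
      have huvx : ∀ a b : PBT, tle a t₁ → tle b t₂ → lprod a b = lprod u v →
          a = u ∧ b = v := by
        intro a b ha hb he
        exact lprod_inj he (by rw [tle_leaves ha, ← tle_leaves hu])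
      rw [P1 μ hμrefl hμsum t₁ t₂ (wt (lprod u v)) u v (le_refl _) hu hv]
      rw [Finset.sum_eq_single u, Finset.sum_eq_single v]
      · simp
      · -- ∀ b ∈ supp, b ≠ v → term = 0
        intro b _ hbv
        by_cases he : lprod u b = lprod u v
        · exact absurd (lprod_inj he rfl).2 hbv
        · simp [he]
      · intro hvs
        have h0 : μ v t₂ = 0 := by rw [← hM]; exact Finsupp.notMem_support_iff.1 hvs
        simp [h0]
      · -- ∀ a ∈ supp, a ≠ u → inner sum = 0
        intro a _ hau
        apply Finset.sum_eq_zero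
        intro b _
        by_cases he : lprod a b = lprod u v
        · by_cases ha : tle a t₁
          · by_cases hb : tle b t₂
            · exact absurd (huvx a b ha hb he).1 hau
            · simp [hμzero b t₂ hb]
          · simp [hμzero a t₁ ha]
        · simp [he]
      · intro hus
        have h0 : μ u t₁ = 0 := by rw [← hM]; exact Finsupp.notMem_support_iff.1 hus
        apply Finset.sum_eq_zero
        intro b _
        simp [h0]
    · rw [hμzero x _ hx]
      symm
      apply Finset.sum_eq_zero
      intro a _
      apply Finset.sum_eq_zero
      intro b _
      by_cases he : lprod a b = x
      · subst he
        by_cases ha : tle a t₁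
        · by_cases hb : tle b t₂
          · exact absurd (tle_lprod ha hb) hx
          · simp [hμzero b t₂ hb]
        · simp [hμzero a t₁ ha]
      · simp [he]
  refine ⟨key, ?_⟩
  intro t rest h1 h2
  clear hμrefl hμzero hμsum hM h1 h2
  induction rest generalizing t with
  | nil => simp
  | cons s rest ih =>
      simp only [List.foldl_cons, List.map_cons]
      rw [← key t s]
      exact ih (lprod t s)
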